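/- Let f : (0,∞) → ℝ be concave with sign(f(x)) = sign(x−1), t ↦ f(1/t) integrable over (0,1], and η ∈ (0,1). Then the equation ∑_{k=0}^∞ (1−η)^k f(1/(c(1−η)^k)) = 0 has a unique solution c ∈ (1,∞). -/

import Mathlib

open MeasureTheory

/-- For `η ∈ (0,1)`, the equation `∑_{k=0}^∞ (1-η)^k f(1/(c(1-η)^k)) = 0`
has a unique positive solution `c`, and it lies in `(1,∞)`. -/
theorem stmt_11 (f : ℝ → ℝ) (hconc : ConcaveOn ℝ (Set.Ioi 0) f)
    (hneg : ∀ x : ℝ, 0 < x → x < 1 → f x < 0)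
    (hone : f 1 = 0)
    (hposf : ∀ x : ℝ, 1 < x → 0 < f x)
    (hint : IntegrableOn (fun t => f (1 / t)) (Set.Ioc 0 1))
    (η : ℝ) (hη0 : 0 < η) (hη1 : η < 1) :
    ∃ c : ℝ, 1 < c ∧ (∑' k : ℕ, (1 - η) ^ k * f (1 / (c * (1 - η) ^ k))) = 0 ∧
      ∀ c' : ℝ, 0 < c' →
        (∑' k : ℕ, (1 - η) ^ k * f (1 / (c' * (1 - η) ^ k))) = 0 → c' = c := by
  set q : ℝ := 1 - η with hqdef
  have hq0 : (0:ℝ) < q := by simp only [hqdef]; linarith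
  have hq1 : q < 1 := by simp only [hqdef]; linarith
  -- basic sign facts
  have hfnn : ∀ x : ℝ, 1 ≤ x → 0 ≤ f x := by
    intro x hx
    rcases eq_or_lt_of_le hx with h | h
    · rw [← h, hone]
    · exact (hposf x h).le
  have hfnp : ∀ x : ℝ, 0 < x → x ≤ 1 → f x ≤ 0 := by
    intro x hx hx1
    rcases eq_or_lt_of_le hx1 with h | h
    · rw [h, hone]
    · exact (hneg x hx h).le
  -- concavity consequence below 1
  have hcc : ∀ x y : ℝ, 0 < x → x < y → y < 1 → (1 - y) / (1 - x) * f x ≤ f y := by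
    intro x y hx hxy hy1
    have h1x : 0 < 1 - x := by linarith
    have key := hconc.2 (Set.mem_Ioi.2 hx) (Set.mem_Ioi.2 one_pos)
      (show (0:ℝ) ≤ (1 - y) / (1 - x) from div_nonneg (by linarith) (by linarith))
      (show (0:ℝ) ≤ (y - x) / (1 - x) from div_nonneg (by linarith) (by linarith))
      (by field_simp; ring)
    simp only [smul_eq_mul, hone, mul_zero, add_zero, mul_one] at key
    have hyy : (1 - y) / (1 - x) * x + (y - x) / (1 - x) = y := by field_simp; ring
    rwa [hyy] at key
  -- strict monotonicity on (0,1]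
  have hsm : StrictMonoOn f (Set.Ioc 0 1) := by
    intro x hx y hy hxy
    rcases eq_or_lt_of_le hy.2 with h | h
    · rw [h, hone]; exact hneg x hx.1 (h ▸ hxy)
    · have h1 := hcc x y hx.1 hxy h
      have hfx := hneg x hx.1 (hxy.trans h)
      have ha : (1 - y) / (1 - x) < 1 := by
        rw [div_lt_one (by linarith)]; linarith
      nlinarith
  -- monotonicity on (0,∞)
  have hmono : MonotoneOn f (Set.Ioi 0) := by
    intro x hx y hy hxy
    rcases eq_or_lt_of_le hxy with rfl | hlt
    · exact le_rfl
    rcases le_or_gt y 1 with hy1 | hy1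
    · exact (hsm ⟨Set.mem_Ioi.1 hx, le_of_lt (hlt.trans_le hy1)⟩ ⟨Set.mem_Ioi.1 hy, hy1⟩ hlt).le
    rcases le_or_gt x 1 with hx1 | hx1
    · exact le_trans (hfnp x (Set.mem_Ioi.1 hx) hx1) (hposf y hy1).le
    by_contra hcon
    push_neg at hcon
    have hs0 : (f y - f x) / (y - x) < 0 :=
      div_neg_of_neg_of_pos (by linarith) (by linarith)
    set s := (f y - f x) / (y - x) with hs
    set z := y + (f y + 1) / (-s) with hz
    have hfy : 0 < f y := hposf y hy1
    have hyz : y < z := by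
      have : 0 < (f y + 1) / (-s) := div_pos (by linarith) (by linarith)
      simp only [hz]; linarith
    have hsl := hconc.slope_anti_adjacent (Set.mem_Ioi.2 (show (0:ℝ) < x by linarith))
      (Set.mem_Ioi.2 (show (0:ℝ) < z by linarith)) hlt hyz
    have hzy : 0 < z - y := by linarith
    have h2 : f z - f y ≤ s * (z - y) := (div_le_iff₀ hzy).1 hsl
    have h3 : s * (z - y) = -(f y + 1) := by
      have hs' : s ≠ 0 := ne_of_lt hs0
      have hzz : z - y = (f y + 1) / (-s) := by simp only [hz]; ring
      rw [hzz]
      field_simp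
    have := hposf z (by linarith)
    linarith
  -- antitone facts about u ↦ f(1/u)
  have ganti : ∀ s t : ℝ, 0 < s → s ≤ t → f (1/t) ≤ f (1/s) := by
    intro s t hs hst
    have ht : 0 < t := lt_of_lt_of_le hs hst
    exact hmono (Set.mem_Ioi.2 (by positivity)) (Set.mem_Ioi.2 (by positivity))
      (one_div_le_one_div_of_le hs hst)
  have gstrict : ∀ s t : ℝ, 1 ≤ s → s < t → f (1/t) < f (1/s) := by
    intro s t hs hst
    have h0s : 0 < s := by linarith
    have h0t : 0 < t := by linarith
    exact hsm ⟨div_pos one_pos h0t, by rw [div_le_one h0t]; linarith⟩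
      ⟨div_pos one_pos h0s, by rw [div_le_one h0s]; linarith⟩
      (one_div_lt_one_div_of_lt h0s hst)
  -- continuity of f on (0,∞) and of u ↦ f(1/u)
  have hfc : ContinuousOn f (Set.Ioi 0) := hconc.continuousOn isOpen_Ioi
  have hcont : ContinuousOn (fun u : ℝ => f (1/u)) (Set.Ioi 0) := by
    apply hfc.comp (ContinuousOn.div continuousOn_const continuousOn_id
      (fun u hu => ne_of_gt (Set.mem_Ioi.1 hu)))
    intro u hu
    exact Set.mem_Ioi.2 (div_pos one_pos (Set.mem_Ioi.1 hu))
  -- integrability on (0,b]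
  have hGint : ∀ b : ℝ, 0 < b → IntegrableOn (fun u => f (1/u)) (Set.Ioc 0 b) := by
    intro b hb
    rcases le_or_gt b 1 with h | h
    · exact hint.mono_set (Set.Ioc_subset_Ioc_right h)
    · rw [← Set.Ioc_union_Ioc_eq_Ioc (le_of_lt one_pos) h.le]
      refine hint.union ?_
      have : ContinuousOn (fun u : ℝ => f (1/u)) (Set.Icc 1 b) :=
        hcont.mono (fun u hu => Set.mem_Ioi.2 (lt_of_lt_of_le one_pos hu.1))
      exact this.integrableOn_Icc.mono_set Set.Ioc_subset_Icc_self
  -- the key per-term integral bound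
  have key : ∀ c : ℝ, 0 < c → ∀ k : ℕ,
      η * (q^k * f (1/(c*q^k))) ≤ (1/c) * ∫ u in Set.Ioc (c*q^(k+1)) (c*q^k), f (1/u) := by
    intro c hc k
    have hqk : 0 < q^k := pow_pos hq0 k
    have hab : c*q^(k+1) < c*q^k := by
      rw [pow_succ]
      nlinarith [mul_pos hc hqk]
    have hint' : IntegrableOn (fun u => f (1/u)) (Set.Ioc (c*q^(k+1)) (c*q^k)) :=
      (hGint (c*q^k) (by positivity)).mono_set (Set.Ioc_subset_Ioc_left (by positivity))
    have hlow : ∀ u ∈ Set.Ioc (c*q^(k+1)) (c*q^k), f (1/(c*q^k)) ≤ f (1/u) := by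
      intro u hu
      exact ganti u (c*q^k) (lt_trans (by positivity) hu.1) hu.2
    have hμ : volume (Set.Ioc (c*q^(k+1)) (c*q^k)) ≠ ⊤ := measure_Ioc_lt_top.ne
    have hge := setIntegral_ge_of_const_le_real measurableSet_Ioc hμ hlow hint'
    rw [Real.volume_real_Ioc_of_le (by linarith)] at hge
    have heq : c*q^k - c*q^(k+1) = c * (η * q^k) := by
      rw [pow_succ]; simp only [hqdef]; ring
    rw [heq] at hge
    have h4 : η * (q^k * f (1/(c*q^k))) = (1/c) * (f (1/(c*q^k)) * (c * (η * q^k))) := by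
      field_simp
    rw [h4]
    exact mul_le_mul_of_nonneg_left hge (by positivity)
  -- telescoping
  have tel : ∀ c : ℝ, 0 < c → ∀ N : ℕ,
      ∑ k ∈ Finset.range N, ∫ u in Set.Ioc (c*q^(k+1)) (c*q^k), f (1/u)
        = ∫ u in Set.Ioc (c*q^N) c, f (1/u) := by
    intro c hc N
    induction N with
    | zero => simp
    | succ N ih =>
      rw [Finset.sum_range_succ, ih]
      have h1 : c*q^(N+1) ≤ c*q^N := by
        rw [pow_succ]; nlinarith [mul_pos hc (pow_pos hq0 N)]
      have h2 : c*q^N ≤ c := mul_le_of_le_one_right hc.le (pow_le_one₀ hq0.le hq1.le)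
      have hu : Set.Ioc (c*q^(N+1)) (c*q^N) ∪ Set.Ioc (c*q^N) c = Set.Ioc (c*q^(N+1)) c :=
        Set.Ioc_union_Ioc_eq_Ioc h1 h2
      have hd : Disjoint (Set.Ioc (c*q^(N+1)) (c*q^N)) (Set.Ioc (c*q^N) c) := by
        rw [Set.Ioc_disjoint_Ioc]
        exact min_le_of_left_le (le_max_right _ _)
      have i1 : IntegrableOn (fun u => f (1/u)) (Set.Ioc (c*q^(N+1)) (c*q^N)) :=
        (hGint (c*q^N) (by positivity)).mono_set (Set.Ioc_subset_Ioc_left (by positivity))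
      have i2 : IntegrableOn (fun u => f (1/u)) (Set.Ioc (c*q^N) c) :=
        (hGint c hc).mono_set (Set.Ioc_subset_Ioc_left (by positivity))
      rw [add_comm, ← setIntegral_union hd measurableSet_Ioc i1 i2, hu]
  -- partial sum bound
  have psum : ∀ c : ℝ, 0 < c → ∀ N : ℕ,
      η * ∑ k ∈ Finset.range N, q^k * f (1/(c*q^k))
        ≤ (1/c) * ∫ u in Set.Ioc (c*q^N) c, f (1/u) := by
    intro c hc N
    rw [← tel c hc N, Finset.mul_sum, Finset.mul_sum]
    exact Finset.sum_le_sum (fun k _ => key c hc k)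
  -- the absolute integral bound
  set Iabs : ℝ := ∫ u in Set.Ioc (0:ℝ) 1, |f (1/u)| with hIdef
  have habsint : IntegrableOn (fun u => |f (1/u)|) (Set.Ioc (0:ℝ) 1) := hint.abs
  have hIabs0 : 0 ≤ Iabs := setIntegral_nonneg measurableSet_Ioc (fun u _ => abs_nonneg _)
  have intb : ∀ a c : ℝ, 0 < a → a ≤ 1 → a ≤ c →
      (∫ u in Set.Ioc a c, f (1/u)) ≤ Iabs := by
    intro a c ha ha1 hac
    have step : ∀ b : ℝ, a ≤ b → b ≤ 1 → (∫ u in Set.Ioc a b, f (1/u)) ≤ Iabs := by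
      intro b hab hb1
      have hsub : Set.Ioc a b ⊆ Set.Ioc 0 1 := Set.Ioc_subset_Ioc ha.le hb1
      calc (∫ u in Set.Ioc a b, f (1/u)) ≤ ∫ u in Set.Ioc a b, |f (1/u)| :=
            setIntegral_mono ((hGint 1 one_pos).mono_set hsub) (habsint.mono_set hsub)
              (fun u => le_abs_self _)
        _ ≤ Iabs := setIntegral_mono_set habsint (ae_of_all _ (fun u => abs_nonneg _))
              (HasSubset.Subset.eventuallyLE hsub)
    rcases le_or_gt c 1 with h | h
    · exact step c hac h
    · have hsplit : Set.Ioc a c = Set.Ioc a 1 ∪ Set.Ioc 1 c :=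
        (Set.Ioc_union_Ioc_eq_Ioc ha1 h.le).symm
      have hd : Disjoint (Set.Ioc a 1) (Set.Ioc (1:ℝ) c) := by
        rw [Set.Ioc_disjoint_Ioc]
        exact min_le_of_left_le (le_max_right _ _)
      have i1 : IntegrableOn (fun u => f (1/u)) (Set.Ioc a 1) :=
        hint.mono_set (Set.Ioc_subset_Ioc_left ha.le)
      have i2 : IntegrableOn (fun u => f (1/u)) (Set.Ioc (1:ℝ) c) :=
        (hGint c (by linarith)).mono_set (Set.Ioc_subset_Ioc_left one_pos.le)
      rw [hsplit, setIntegral_union hd measurableSet_Ioc i1 i2]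
      have h1 := step 1 ha1 le_rfl
      have h2 : (∫ u in Set.Ioc (1:ℝ) c, f (1/u)) ≤ 0 := by
        apply setIntegral_nonpos measurableSet_Ioc
        intro u hu
        have hu1 : 1 < u := hu.1
        exact hfnp (1/u) (by positivity) (by rw [div_le_one (by linarith)]; linarith)
      linarith
  -- nonnegativity of terms for c ≤ 1
  have hterm_nn : ∀ c : ℝ, 0 < c → c ≤ 1 → ∀ k : ℕ, 0 ≤ q^k * f (1/(c*q^k)) := by
    intro c hc hc1 k
    have hqk : 0 < q^k := pow_pos hq0 k
    have h1 : c*q^k ≤ 1 :=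
      le_trans (mul_le_of_le_one_right hc.le (pow_le_one₀ hq0.le hq1.le)) hc1
    have : 1 ≤ 1/(c*q^k) := one_le_one_div (by positivity) h1
    exact mul_nonneg hqk.le (hfnn _ this)
  -- summability for c ≤ 1
  have hsummle : ∀ c : ℝ, 0 < c → c ≤ 1 → Summable (fun k => q^k * f (1/(c*q^k))) := by
    intro c hc hc1
    apply summable_of_sum_range_le (c := Iabs/(c*η)) (hterm_nn c hc hc1)
    intro N
    have hqN : c*q^N ≤ 1 :=
      le_trans (mul_le_of_le_one_right hc.le (pow_le_one₀ hq0.le hq1.le)) hc1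
    have h1 := psum c hc N
    have h2 := intb (c*q^N) c (by positivity) hqN
      (mul_le_of_le_one_right hc.le (pow_le_one₀ hq0.le hq1.le))
    have h3 : η * ∑ k ∈ Finset.range N, q^k * f (1/(c*q^k)) ≤ (1/c) * Iabs :=
      le_trans h1 (mul_le_mul_of_nonneg_left h2 (by positivity))
    rw [le_div_iff₀ (by positivity : (0:ℝ) < c*η)]
    calc (∑ k ∈ Finset.range N, q^k * f (1/(c*q^k))) * (c*η)
        = c * (η * ∑ k ∈ Finset.range N, q^k * f (1/(c*q^k))) := by ring
      _ ≤ c * ((1/c) * Iabs) := mul_le_mul_of_nonneg_left h3 hc.le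
      _ = Iabs := by field_simp
  -- shifting lemma for summability
  have shift : ∀ F : ℝ → ℝ,
      (∀ c : ℝ, 0 < c → c ≤ 1 → Summable (fun k => q^k * F (c*q^k))) →
      ∀ c : ℝ, 0 < c → Summable (fun k => q^k * F (c*q^k)) := by
    intro F hbase c hc
    rcases le_or_gt c 1 with h | h
    · exact hbase c hc h
    obtain ⟨K, hK⟩ := exists_pow_lt_of_lt_one (show (0:ℝ) < 1/c by positivity) hq1
    have hcK : c * q^K ≤ 1 := by
      have : c * q^K < c * (1/c) := mul_lt_mul_of_pos_left hK hc
      rw [mul_one_div_cancel (ne_of_gt hc)] at this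
      exact this.le
    have h2 := (hbase (c*q^K) (by positivity) hcK).mul_left (q^K)
    have h3 : (fun k => q^K * (q^k * F (c*q^K*q^k)))
        = (fun k => q^(k+K) * F (c*q^(k+K))) := by
      funext k
      rw [pow_add, show c * (q^k*q^K) = c*q^K*q^k from by ring]
      ring
    rw [h3] at h2
    exact (summable_nat_add_iff K).1 h2
  have hsumm : ∀ c : ℝ, 0 < c → Summable (fun k => q^k * f (1/(c*q^k))) :=
    shift (fun t => f (1/t)) hsummle
  have hsummabs : ∀ c : ℝ, 0 < c → Summable (fun k => q^k * |f (1/(c*q^k))|) := by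
    apply shift (fun t => |f (1/t)|)
    intro c hc hc1
    apply (hsummle c hc hc1).congr
    intro k
    have h1 : c*q^k ≤ 1 :=
      le_trans (mul_le_of_le_one_right hc.le (pow_le_one₀ hq0.le hq1.le)) hc1
    rw [abs_of_nonneg (hfnn _ (one_le_one_div (by positivity) h1))]
  -- bound on the full sum
  have Sbound : ∀ c : ℝ, 0 < c → (∑' k, q^k * f (1/(c*q^k))) ≤ Iabs / (c*η) := by
    intro c hc
    refine le_of_tendsto (hsumm c hc).hasSum.tendsto_sum_nat ?_
    obtain ⟨K, hK⟩ := exists_pow_lt_of_lt_one (show (0:ℝ) < 1/c by positivity) hq1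
    filter_upwards [Filter.eventually_ge_atTop K] with N hN
    have hqN : c*q^N ≤ 1 := by
      have hKN : q^N ≤ q^K := pow_le_pow_of_le_one hq0.le hq1.le hN
      have : c * q^N ≤ c * q^K := mul_le_mul_of_nonneg_left hKN hc.le
      have h2 : c * q^K < c * (1/c) := mul_lt_mul_of_pos_left hK hc
      rw [mul_one_div_cancel (ne_of_gt hc)] at h2
      linarith
    have h1 := psum c hc N
    have h2 := intb (c*q^N) c (by positivity) hqN
      (mul_le_of_le_one_right hc.le (pow_le_one₀ hq0.le hq1.le))
    have h3 : η * ∑ k ∈ Finset.range N, q^k * f (1/(c*q^k)) ≤ (1/c) * Iabs :=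
      le_trans h1 (mul_le_mul_of_nonneg_left h2 (by positivity))
    rw [le_div_iff₀ (by positivity : (0:ℝ) < c*η)]
    calc (∑ k ∈ Finset.range N, q^k * f (1/(c*q^k))) * (c*η)
        = c * (η * ∑ k ∈ Finset.range N, q^k * f (1/(c*q^k))) := by ring
      _ ≤ c * ((1/c) * Iabs) := mul_le_mul_of_nonneg_left h3 hc.le
      _ = Iabs := by field_simp
  -- positivity for c ≤ 1
  have Spos : ∀ c : ℝ, 0 < c → c ≤ 1 → 0 < ∑' k, q^k * f (1/(c*q^k)) := by
    intro c hc hc1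
    apply Summable.tsum_pos (hsumm c hc) (hterm_nn c hc hc1) 1
    have hcq : c * q^1 < 1 := by
      rw [pow_one]
      nlinarith
    have : 1 < 1/(c*q^1) := one_lt_one_div (by positivity) hcq
    exact mul_pos (pow_pos hq0 1) (hposf _ this)
  -- strict antitonicity on [1,∞)
  have Santi : ∀ c c' : ℝ, 1 ≤ c → c < c' →
      (∑' k, q^k * f (1/(c'*q^k))) < ∑' k, q^k * f (1/(c*q^k)) := by
    intro c c' hc hcc'
    have h0c : 0 < c := lt_of_lt_of_le one_pos hc
    have h0c' : 0 < c' := by linarith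
    refine Summable.tsum_lt_tsum (i := 0) (fun k => ?_) ?_ (hsumm c' h0c') (hsumm c h0c)
    · refine mul_le_mul_of_nonneg_left
        (ganti (c*q^k) (c'*q^k) (by positivity) ?_) (by positivity)
      exact mul_le_mul_of_nonneg_right hcc'.le (by positivity)
    · simp only [pow_zero, one_mul, mul_one]
      exact gstrict c c' hc hcc'
  -- negativity at a large point C
  have hfhalf : f (1/2) < 0 := by
    have := hneg (1/2) (by norm_num) (by norm_num)
    simpa using this
  set C : ℝ := max (1/q) (max 2 ((Iabs + 1)/(η * (-f (1/2))))) with hCdef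
  have hC2 : (2:ℝ) ≤ C := le_trans (le_max_left _ _) (le_max_right _ _)
  have hCm : (Iabs + 1)/(η * (-f (1/2))) ≤ C :=
    le_trans (le_max_right _ _) (le_max_right _ _)
  have hC1 : (1:ℝ) < C := by linarith
  have hC0 : (0:ℝ) < C := by linarith
  have hCneg : (∑' k, q^k * f (1/(C*q^k))) < 0 := by
    have hsplit := Summable.tsum_eq_zero_add (hsumm C hC0)
    have hT : (∑' k : ℕ, q^(k+1) * f (1/(C*q^(k+1))))
        = q * ∑' k : ℕ, q^k * f (1/((C*q)*q^k)) := by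
      rw [← tsum_mul_left]
      congr 1
      funext k
      rw [pow_succ, show C * (q^k*q) = C*q*q^k from by ring]
      ring
    have hTb : q * (∑' k : ℕ, q^k * f (1/((C*q)*q^k))) ≤ q * (Iabs/((C*q)*η)) :=
      mul_le_mul_of_nonneg_left (Sbound (C*q) (by positivity)) hq0.le
    have heq2 : q * (Iabs/((C*q)*η)) = Iabs/(C*η) := by
      field_simp
    have hsmall : Iabs/(C*η) < -f (1/2) := by
      rw [div_lt_iff₀ (by positivity)]
      have hden : (0:ℝ) < η * (-f (1/2)) := by nlinarith
      have := (div_le_iff₀ hden).1 hCm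
      nlinarith
    have hg2 : f (1/C) ≤ f (1/2) := ganti 2 C two_pos hC2
    rw [hsplit]
    simp only [pow_zero, one_mul, mul_one]
    have hTfin : (∑' k : ℕ, q^(k+1) * f (1/(C*q^(k+1)))) < -f (1/2) := by
      rw [hT]; linarith
    linarith
  -- continuity on [1, C]
  have Scont : ContinuousOn (fun c => ∑' k : ℕ, q^k * f (1/(c*q^k))) (Set.Icc 1 C) := by
    apply continuousOn_tsum
      (u := fun k => q^k * (|f (1/(1*q^k))| + |f (1/(C*q^k))|))
    · intro k
      apply ContinuousOn.mul continuousOn_const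
      apply hfc.comp
      · exact ContinuousOn.div continuousOn_const
          (continuousOn_id.mul continuousOn_const)
          (fun c hc => by
            have : (1:ℝ) ≤ c := hc.1
            positivity)
      · intro c hc
        have : (1:ℝ) ≤ c := hc.1
        exact Set.mem_Ioi.2 (by positivity)
    · apply ((hsummabs 1 one_pos).add (hsummabs C hC0)).congr
      intro k
      ring
    · intro k c hc
      have hc1 : (1:ℝ) ≤ c := hc.1
      have hc0 : (0:ℝ) < c := by linarith
      rw [Real.norm_eq_abs, abs_mul, abs_of_nonneg (pow_nonneg hq0.le k)]
      apply mul_le_mul_of_nonneg_left _ (pow_nonneg hq0.le k)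
      have h1 : f (1/(c*q^k)) ≤ f (1/(1*q^k)) :=
        ganti (1*q^k) (c*q^k) (by positivity)
          (mul_le_mul_of_nonneg_right hc1 (by positivity))
      have h2 : f (1/(C*q^k)) ≤ f (1/(c*q^k)) :=
        ganti (c*q^k) (C*q^k) (by positivity)
          (mul_le_mul_of_nonneg_right hc.2 (by positivity))
      have h3 := le_abs_self (f (1/(1*q^k)))
      have h4 := neg_abs_le (f (1/(C*q^k)))
      have h5 := abs_nonneg (f (1/(1*q^k)))
      have h6 := abs_nonneg (f (1/(C*q^k)))
      rw [abs_le]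
      constructor <;> linarith
  -- IVT: existence
  have hS1 : 0 < ∑' k : ℕ, q^k * f (1/(1*q^k)) := Spos 1 one_pos le_rfl
  have hmem : (0:ℝ) ∈ Set.Icc (∑' k : ℕ, q^k * f (1/(C*q^k)))
      (∑' k : ℕ, q^k * f (1/(1*q^k))) := ⟨hCneg.le, hS1.le⟩
  obtain ⟨c, hcmem, hcS⟩ := intermediate_value_Icc' hC1.le Scont hmem
  have hcS' : (∑' k : ℕ, q^k * f (1/(c*q^k))) = 0 := hcS
  have hc1lt : 1 < c := by
    rcases lt_or_eq_of_le hcmem.1 with h | h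
    · exact h
    · exfalso
      rw [← h] at hcS'
      have h1 : (∑' k : ℕ, q^k * f (1/(1*q^k))) = 0 := hcS'
      linarith
  have hc0 : 0 < c := by linarith
  refine ⟨c, hc1lt, hcS, ?_⟩
  intro c' hc' hS'
  rcases le_or_gt c' 1 with h | h
  · exact absurd hS' (ne_of_gt (Spos c' hc' h))
  · rcases lt_trichotomy c' c with hlt | heq | hgt
    · have := Santi c' c h.le hlt
      rw [hcS', hS'] at this
      exact absurd this (lt_irrefl 0)
    · exact heq
    · have := Santi c c' hc1lt.le hgt
      rw [hcS', hS'] at this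
      exact absurd this (lt_irrefl 0)
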